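/- Let m ≥ 2 be an integer, let r ≥ 1 be a real number, and let D be a positive integer with D ≥ 48·r·(log₂ m)². Let a₁, …, a_D be positive integers with Σ_{i=1}^{D} a_i ≤ m. Then there exists an index j with D/4 ≤ j ≤ 3D/4 such that a_j ≤ (1/(12·r·log₂ m)) · min( Σ_{i=1}^{j−1} a_i , Σ_{i=j+1}^{D} a_i ). -/

import Mathlib

open Finset in
lemma grow_aux (f : ℕ → ℝ) (hf : Monotone f) (c : ℝ) (hc : 0 ≤ c)
    (T : Finset ℕ) (b : ℕ)
    (hT : ∀ j ∈ T, (1+c) * f (j-1) ≤ f j)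
    (hb : ∀ j ∈ T, b < j) :
    ∀ n, b ≤ n → (∀ j ∈ T, j ≤ n) → (1+c)^T.card * f b ≤ f n := by
  induction T using Finset.induction_on_max with
  | empty => intro n hbn _; simpa using hf hbn
  | insert a s hmax ih =>
    intro n hbn hn
    have han : a ≤ n := hn a (mem_insert_self _ _)
    have hba : b < a := hb a (mem_insert_self _ _)
    have h1 : (1+c)^s.card * f b ≤ f (a-1) := by
      refine ih (fun j hj => hT j (mem_insert_of_mem hj))
        (fun j hj => hb j (mem_insert_of_mem hj)) (a-1) (by omega)
        (fun j hj => by have := hmax j hj; omega)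
    have hcard : (insert a s).card = s.card + 1 :=
      Finset.card_insert_of_notMem (fun h => lt_irrefl a (hmax a h))
    have h2 : (1+c) * f (a-1) ≤ f a := hT a (mem_insert_self _ _)
    have h3 : f a ≤ f n := hf han
    have h4 : (0:ℝ) ≤ 1 + c := by linarith
    calc (1+c)^(insert a s).card * f b = (1+c) * ((1+c)^s.card * f b) := by
          rw [hcard]; ring
      _ ≤ (1+c) * f (a-1) := by nlinarith [h1]
      _ ≤ f n := le_trans h2 h3

open Finset


lemma numeric_contra (r L K : ℝ) (hr : 1 ≤ r) (hL : 1 ≤ L)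
    (h1 : 12*r*L^2 - 1/4 ≤ K) (h2 : K ≤ L * Real.log 2 * (12*r*L+1)) : False := by
  have hlog2 : Real.log 2 < 0.6931471808 := Real.log_two_lt_d9
  have hlog2pos : (0:ℝ) < Real.log 2 := Real.log_pos (by norm_num)
  have hL0 : (0:ℝ) < L := by linarith
  have hrL2 : (1:ℝ) ≤ r * L^2 := by nlinarith
  have hLrL2 : L ≤ r * L^2 := by nlinarith
  have hx7 : Real.log 2 ≤ 0.7 := by linarith
  have h12 : 12 * r * Real.log 2 * L^2 ≤ 8.4 * (r * L^2) := by
    nlinarith [mul_nonneg (by linarith : (0:ℝ) ≤ 0.7 - Real.log 2)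
      (by positivity : (0:ℝ) ≤ 12 * r * L^2)]
  have hxL : Real.log 2 * L ≤ 0.7 * (r * L^2) := by
    nlinarith [mul_le_mul_of_nonneg_right hx7 hL0.le]
  have hfinal : L * Real.log 2 * (12 * r * L + 1)
      = 12 * r * Real.log 2 * L^2 + Real.log 2 * L := by ring
  linarith [h1, h2, hfinal ▸ h2]

/-- Let `m ≥ 2` be an integer, `r ≥ 1` a real, and `D` a positive integer
with `D ≥ 48 r (log₂ m)²`. Given positive integers `a₁, …, a_D` with `∑ aᵢ ≤ m`, there is an
index `j ∈ [D/4, 3D/4]` such that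
`a_j ≤ (1/(12 r log₂ m)) · min(∑_{i<j} aᵢ, ∑_{i>j} aᵢ)`. -/
theorem sequence_splitting (m : ℕ) (hm : 2 ≤ m) (r : ℝ) (hr : 1 ≤ r)
    (D : ℕ) (hD : 0 < D)
    (hDlarge : 48 * r * (Real.logb 2 m) ^ 2 ≤ (D : ℝ))
    (a : ℕ → ℕ) (hpos : ∀ i ∈ Finset.Icc 1 D, 0 < a i)
    (hsum : ∑ i ∈ Finset.Icc 1 D, a i ≤ m) :
    ∃ j : ℕ, (D : ℝ) / 4 ≤ (j : ℝ) ∧ (j : ℝ) ≤ 3 * (D : ℝ) / 4 ∧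
      (a j : ℝ) ≤ (1 / (12 * r * Real.logb 2 m)) *
        min ((∑ i ∈ Finset.Icc 1 (j - 1), a i : ℕ) : ℝ)
            ((∑ i ∈ Finset.Icc (j + 1) D, a i : ℕ) : ℝ) := by
  by_contra hcon
  push_neg at hcon
  set L : ℝ := Real.logb 2 m with hLdef
  have hm0 : (0:ℝ) < m := by positivity
  have hL1 : 1 ≤ L := by
    have h2 : Real.logb 2 2 = 1 := Real.logb_self_eq_one (by norm_num)
    rw [hLdef, ← h2]
    exact Real.logb_le_logb_of_le (by norm_num) (by norm_num) (by exact_mod_cast hm)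
  set c : ℝ := 1 / (12 * r * L) with hcdef
  have hc0 : 0 < c := by rw [hcdef]; positivity
  have hrL : (0:ℝ) < 12 * r * L := by positivity
  have hD48 : 48 ≤ D := by
    have : (48:ℝ) ≤ (D:ℝ) := le_trans (by nlinarith) hDlarge
    exact_mod_cast this
  set lo : ℕ := (D + 3) / 4 with hlodef
  set hi : ℕ := 3 * D / 4 with hhidef
  have hlo4 : D ≤ 4 * lo := by omega
  have hhi4 : 4 * hi ≤ 3 * D := by omega
  have hlo2 : 12 ≤ lo := by omega
  have hhiD : hi + 1 ≤ D := by omega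
  have hlohi : lo ≤ hi := by omega
  have hbad : ∀ j ∈ Finset.Icc lo hi,
      (1 / (12 * r * L)) * min ((∑ i ∈ Finset.Icc 1 (j - 1), a i : ℕ) : ℝ)
        ((∑ i ∈ Finset.Icc (j + 1) D, a i : ℕ) : ℝ) < a j := by
    intro j hj
    rw [Finset.mem_Icc] at hj
    refine hcon j ?_ ?_
    · have h4j : (D:ℝ) ≤ 4 * j := by exact_mod_cast (by omega : D ≤ 4 * j)
      linarith
    · have h4j : (4:ℝ) * j ≤ 3 * D := by exact_mod_cast (by omega : 4 * j ≤ 3 * D)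
      linarith
  classical
  set A : Finset ℕ := (Finset.Icc lo hi).filter
    (fun j => (∑ i ∈ Finset.Icc 1 (j-1), a i) ≤ (∑ i ∈ Finset.Icc (j+1) D, a i)) with hAdef
  set B : Finset ℕ := (Finset.Icc lo hi).filter
    (fun j => ¬ ((∑ i ∈ Finset.Icc 1 (j-1), a i) ≤ (∑ i ∈ Finset.Icc (j+1) D, a i))) with hBdef
  have hmA : (1+c)^A.card ≤ (m:ℝ) := by
    have hmono : Monotone (fun n => ((∑ i ∈ Finset.Icc 1 n, a i : ℕ) : ℝ)) := by
      intro n n' h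
      show ((∑ i ∈ Finset.Icc 1 n, a i : ℕ) : ℝ) ≤ ((∑ i ∈ Finset.Icc 1 n', a i : ℕ) : ℝ)
      have := Finset.sum_le_sum_of_subset (f := a) (Finset.Icc_subset_Icc_right (a := 1) h)
      exact_mod_cast this
    have hgrow := grow_aux _ hmono c hc0.le A (lo - 1)
      (fun j hj => by
        rw [hAdef, Finset.mem_filter, Finset.mem_Icc] at hj
        obtain ⟨⟨hj1, hj2⟩, hple⟩ := hj
        have hb := hbad j (Finset.mem_Icc.mpr ⟨hj1, hj2⟩)
        rw [min_eq_left (by exact_mod_cast hple)] at hb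
        have hsplit : ∑ i ∈ Finset.Icc 1 j, a i
            = (∑ i ∈ Finset.Icc 1 (j-1), a i) + a j := by
          have h1 : 1 ≤ j := by omega
          have := Finset.sum_Icc_succ_top (a := 1) (b := j-1) (f := a) (by omega)
          rwa [Nat.sub_add_cancel h1] at this
        show (1+c) * ((∑ i ∈ Finset.Icc 1 (j-1), a i : ℕ) : ℝ)
            ≤ ((∑ i ∈ Finset.Icc 1 j, a i : ℕ) : ℝ)
        rw [hsplit, Nat.cast_add]
        rw [← hcdef] at hb
        have hXnn : (0:ℝ) ≤ ((∑ i ∈ Finset.Icc 1 (j-1), a i : ℕ) : ℝ) := by positivity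
        nlinarith [hb, hXnn])
      (fun j hj => by
        rw [hAdef, Finset.mem_filter, Finset.mem_Icc] at hj; omega)
      D (by omega)
      (fun j hj => by
        rw [hAdef, Finset.mem_filter, Finset.mem_Icc] at hj; omega)
    have hstart : (1:ℝ) ≤ ((∑ i ∈ Finset.Icc 1 (lo-1), a i : ℕ) : ℝ) := by
      have : 0 < ∑ i ∈ Finset.Icc 1 (lo-1), a i :=
        Finset.sum_pos (fun i hi' => hpos i (Finset.mem_Icc.mpr
          ⟨(Finset.mem_Icc.mp hi').1, by have := (Finset.mem_Icc.mp hi').2; omega⟩))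
          ⟨1, Finset.mem_Icc.mpr ⟨le_refl 1, by omega⟩⟩
      exact_mod_cast this
    have hend : ((∑ i ∈ Finset.Icc 1 D, a i : ℕ) : ℝ) ≤ m := by exact_mod_cast hsum
    have hp : (0:ℝ) ≤ (1+c)^A.card := by positivity
    calc (1+c)^A.card = (1+c)^A.card * 1 := by ring
      _ ≤ (1+c)^A.card * ((∑ i ∈ Finset.Icc 1 (lo-1), a i : ℕ) : ℝ) := by nlinarith
      _ ≤ ((∑ i ∈ Finset.Icc 1 D, a i : ℕ) : ℝ) := hgrow
      _ ≤ m := hend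
  have hmB : (1+c)^B.card ≤ (m:ℝ) := by
    have hmono : Monotone (fun n => ((∑ i ∈ Finset.Icc (D+1-n) D, a i : ℕ) : ℝ)) := by
      intro n n' h
      show ((∑ i ∈ Finset.Icc (D+1-n) D, a i : ℕ) : ℝ)
          ≤ ((∑ i ∈ Finset.Icc (D+1-n') D, a i : ℕ) : ℝ)
      have := Finset.sum_le_sum_of_subset (f := a)
        (Finset.Icc_subset_Icc_left (show D+1-n' ≤ D+1-n by omega) (b := D))
      exact_mod_cast this
    have hcardim : (B.image (fun j => D + 1 - j)).card = B.card := by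
      apply Finset.card_image_of_injOn
      intro j hj j' hj' hjj
      simp only [Finset.coe_filter, Set.mem_setOf_eq, Finset.mem_Icc, hBdef] at hj hj'
      simp only at hjj
      omega
    have hgrow := grow_aux _ hmono c hc0.le (B.image (fun j => D + 1 - j)) (D - hi)
      (fun k hk => by
        rw [Finset.mem_image] at hk
        obtain ⟨j, hjB, rfl⟩ := hk
        rw [hBdef, Finset.mem_filter, Finset.mem_Icc] at hjB
        obtain ⟨⟨hj1, hj2⟩, hple⟩ := hjB
        have hb := hbad j (Finset.mem_Icc.mpr ⟨hj1, hj2⟩)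
        rw [min_eq_right (by exact_mod_cast (le_of_not_ge hple))] at hb
        have e1 : D + 1 - (D + 1 - j - 1) = j + 1 := by omega
        have e2 : D + 1 - (D + 1 - j) = j := by omega
        show (1+c) * ((∑ i ∈ Finset.Icc (D+1-(D+1-j-1)) D, a i : ℕ) : ℝ)
            ≤ ((∑ i ∈ Finset.Icc (D+1-(D+1-j)) D, a i : ℕ) : ℝ)
        rw [e1, e2]
        have hsplit : ∑ i ∈ Finset.Icc j D, a i
            = a j + ∑ i ∈ Finset.Icc (j+1) D, a i := by
          rw [show Finset.Icc j D = insert j (Finset.Icc (j+1) D) from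
            Finset.ext (fun x => by simp only [Finset.mem_Icc, Finset.mem_insert]; omega)]
          exact Finset.sum_insert (by simp only [Finset.mem_Icc]; omega)
        rw [hsplit, Nat.cast_add]
        rw [← hcdef] at hb
        have hXnn : (0:ℝ) ≤ ((∑ i ∈ Finset.Icc (j+1) D, a i : ℕ) : ℝ) := by positivity
        nlinarith [hb, hXnn])
      (fun k hk => by
        rw [Finset.mem_image] at hk
        obtain ⟨j, hjB, rfl⟩ := hk
        rw [hBdef, Finset.mem_filter, Finset.mem_Icc] at hjB
        omega)
      D (by omega)
      (fun k hk => by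
        rw [Finset.mem_image] at hk
        obtain ⟨j, hjB, rfl⟩ := hk
        rw [hBdef, Finset.mem_filter, Finset.mem_Icc] at hjB
        omega)
    rw [hcardim] at hgrow
    have e3 : D + 1 - (D - hi) = hi + 1 := by omega
    have e4 : D + 1 - D = 1 := by omega
    rw [e3, e4] at hgrow
    have hstart : (1:ℝ) ≤ ((∑ i ∈ Finset.Icc (hi+1) D, a i : ℕ) : ℝ) := by
      have : 0 < ∑ i ∈ Finset.Icc (hi+1) D, a i :=
        Finset.sum_pos (fun i hi' => hpos i (Finset.mem_Icc.mpr
          ⟨by have := (Finset.mem_Icc.mp hi').1; omega, (Finset.mem_Icc.mp hi').2⟩))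
          ⟨hi+1, Finset.mem_Icc.mpr ⟨le_refl _, by omega⟩⟩
      exact_mod_cast this
    have hend : ((∑ i ∈ Finset.Icc 1 D, a i : ℕ) : ℝ) ≤ m := by exact_mod_cast hsum
    have hp : (0:ℝ) ≤ (1+c)^B.card := by positivity
    calc (1+c)^B.card = (1+c)^B.card * 1 := by ring
      _ ≤ (1+c)^B.card * ((∑ i ∈ Finset.Icc (hi+1) D, a i : ℕ) : ℝ) := by nlinarith
      _ ≤ ((∑ i ∈ Finset.Icc 1 D, a i : ℕ) : ℝ) := hgrow
      _ ≤ m := hend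
  have hcards : A.card + B.card = hi + 1 - lo := by
    rw [hAdef, hBdef, Finset.card_filter_add_card_filter_not, Nat.card_Icc]
  set K : ℕ := max A.card B.card with hKdef
  have hK4 : D ≤ 4 * K + 1 := by omega
  have hmK : (1+c)^K ≤ (m:ℝ) := by
    rcases max_cases A.card B.card with ⟨h1, _⟩ | ⟨h1, _⟩ <;> rw [hKdef, h1]
    · exact hmA
    · exact hmB
  clear_value K
  clear hmA hmB hcards hbad hcon hAdef hBdef hKdef
  clear_value A B
  clear A B
  clear hlo4 hhi4 hlo2 hhiD hlohi hlodef hhidef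
  clear_value lo hi
  clear lo hi
  clear hsum hpos
  clear_value c L
  have h1c : (0:ℝ) < 1 + c := by linarith
  have hlogmK : (K:ℝ) * Real.log (1+c) ≤ Real.log m := by
    have := Real.log_le_log (by positivity) hmK
    rwa [Real.log_pow] at this
  have hlogm : Real.log m = L * Real.log 2 := by
    rw [hLdef, Real.logb, div_mul_cancel₀]
    exact Real.log_ne_zero_of_pos_of_ne_one (by norm_num) (by norm_num)
  have hloglb : 1 / (12 * r * L + 1) ≤ Real.log (1+c) := by
    have h5 : (0:ℝ) < Real.exp (c/(1+c)) := Real.exp_pos _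
    have hexp : Real.exp (c / (1+c)) ≤ 1 + c := by
      have h2 := Real.add_one_le_exp (-(c/(1+c)))
      rw [Real.exp_neg] at h2
      have h4 : -(c/(1+c)) + 1 = 1/(1+c) := by field_simp; ring
      rw [h4] at h2
      have h6 : Real.exp (c/(1+c)) * (1/(1+c)) ≤ 1 := by
        have := mul_le_mul_of_nonneg_left h2 h5.le
        rwa [mul_inv_cancel₀ (ne_of_gt h5)] at this
      rw [mul_one_div, div_le_one h1c] at h6
      exact h6
    have h6 : c / (1+c) ≤ Real.log (1+c) := (Real.le_log_iff_exp_le h1c).mpr hexp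
    have h7 : c / (1+c) = 1 / (12 * r * L + 1) := by
      rw [hcdef]; field_simp
    linarith [h7 ▸ h6]
  have hKlb : 12 * r * L^2 - 1/4 ≤ (K:ℝ) := by
    have hD1 : (D:ℝ) ≤ 4 * (K:ℝ) + 1 := by exact_mod_cast hK4
    linarith [hDlarge]
  have hKub : (K:ℝ) ≤ L * Real.log 2 * (12 * r * L + 1) := by
    have h8 : (K:ℝ) * (1 / (12 * r * L + 1)) ≤ L * Real.log 2 := by
      calc (K:ℝ) * (1 / (12 * r * L + 1)) ≤ (K:ℝ) * Real.log (1+c) :=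
            mul_le_mul_of_nonneg_left hloglb (Nat.cast_nonneg K)
        _ ≤ Real.log m := hlogmK
        _ = L * Real.log 2 := hlogm
    have h9 : (0:ℝ) < 12 * r * L + 1 := by positivity
    rw [mul_one_div, div_le_iff₀ h9] at h8
    exact h8
  exact numeric_contra r L (K:ℝ) hr hL1 hKlb hKub
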